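/- Let H be symmetric positive semidefinite, G symmetric positive definite, ρ > 0. The smallest nonzero eigenvalue of H^{1/2}((1/ρ)G + H)^{-1}H^{1/2} equals ρλ/(1+ρλ) where λ = λ_min^+(G^{-1/2} H G^{-1/2}) is the smallest nonzero eigenvalue of G^{-1/2} H G^{-1/2} (assuming H ≠ 0). -/

import Mathlib

open Matrix

/-- `t` is an eigenvalue of the matrix `A`. -/
def HasEigen {n : ℕ} (A : Matrix (Fin n) (Fin n) ℝ) (t : ℝ) : Prop :=
  ∃ v : Fin n → ℝ, v ≠ 0 ∧ A.mulVec v = t • v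

/-- The smallest nonzero eigenvalue of a matrix. -/
noncomputable def lambdaMinPos {n : ℕ} (A : Matrix (Fin n) (Fin n) ℝ) : ℝ :=
  sInf {t : ℝ | t ≠ 0 ∧ HasEigen A t}

/-- The square root of a positive semidefinite matrix (the definition `Matrix.PosSemidef.sqrt`
of the older Mathlib, which has since been removed). -/
noncomputable def Matrix.PosSemidef.sqrt {n : Type*} [Fintype n] [DecidableEq n]
    {A : Matrix n n ℝ} (hA : A.PosSemidef) : Matrix n n ℝ :=
  (hA.1.eigenvectorUnitary : Matrix n n ℝ) *
    diagonal ((RCLike.ofReal : ℝ → ℝ) ∘ Real.sqrt ∘ hA.1.eigenvalues) *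
    (star (hA.1.eigenvectorUnitary : Matrix n n ℝ))

lemma Matrix.PosSemidef.posSemidef_sqrt {n : Type*} [Fintype n] [DecidableEq n]
    {A : Matrix n n ℝ} (hA : A.PosSemidef) : hA.sqrt.PosSemidef := by
  unfold Matrix.PosSemidef.sqrt
  have hD : (diagonal ((RCLike.ofReal : ℝ → ℝ) ∘ Real.sqrt ∘ hA.1.eigenvalues)).PosSemidef :=
    PosSemidef.diagonal (fun i => by simp [Real.sqrt_nonneg])
  have := hD.mul_mul_conjTranspose_same (hA.1.eigenvectorUnitary : Matrix n n ℝ)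
  simpa [star_eq_conjTranspose] using this

lemma Matrix.PosSemidef.sqrt_mul_self {n : Type*} [Fintype n] [DecidableEq n]
    {A : Matrix n n ℝ} (hA : A.PosSemidef) : hA.sqrt * hA.sqrt = A := by
  unfold Matrix.PosSemidef.sqrt
  set U := (hA.1.eigenvectorUnitary : Matrix n n ℝ)
  have hU : star U * U = 1 := Unitary.star_mul_self_of_mem hA.1.eigenvectorUnitary.2
  have hsp := hA.1.spectral_theorem
  rw [Unitary.conjStarAlgAut_apply] at hsp
  conv_rhs => rw [hsp]
  calc U * diagonal ((RCLike.ofReal : ℝ → ℝ) ∘ Real.sqrt ∘ hA.1.eigenvalues) * star U *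
        (U * diagonal ((RCLike.ofReal : ℝ → ℝ) ∘ Real.sqrt ∘ hA.1.eigenvalues) * star U)
      = U * (diagonal ((RCLike.ofReal : ℝ → ℝ) ∘ Real.sqrt ∘ hA.1.eigenvalues) * (star U * U) *
        diagonal ((RCLike.ofReal : ℝ → ℝ) ∘ Real.sqrt ∘ hA.1.eigenvalues)) * star U := by
        simp only [Matrix.mul_assoc]
    _ = _ := by
      rw [hU, Matrix.mul_one, diagonal_mul_diagonal]
      congr 3
      funext i
      simp [Real.mul_self_sqrt (hA.eigenvalues_nonneg i)]

/-- The set of nonzero eigenvalues of a matrix is finite. -/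
lemma finite_eigenSet {n : ℕ} (A : Matrix (Fin n) (Fin n) ℝ) :
    {t : ℝ | t ≠ 0 ∧ HasEigen A t}.Finite := by
  have h0 : (minpoly ℝ A.mulVecLin) ≠ 0 :=
    minpoly.ne_zero (LinearMap.isIntegral _)
  refine Set.Finite.subset (Polynomial.finite_setOf_isRoot h0) ?_
  rintro t ⟨-, v, hv, hAv⟩
  have hev : Module.End.HasEigenvalue A.mulVecLin t :=
    Module.End.hasEigenvalue_of_hasEigenvector
      ⟨Module.End.mem_eigenspace_iff.2 (by simpa [Matrix.mulVecLin_apply] using hAv), hv⟩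
  exact Module.End.hasEigenvalue_iff_isRoot.mp hev

/-- Nonzero eigenvalues of a positive semidefinite matrix are positive. -/
lemma eigen_pos {n : ℕ} {A : Matrix (Fin n) (Fin n) ℝ} (hA : A.PosSemidef)
    {t : ℝ} (ht : t ≠ 0) (h : HasEigen A t) : 0 < t := by
  obtain ⟨v, hv, hAv⟩ := h
  have h1 : 0 ≤ dotProduct (star v) (A *ᵥ v) := hA.dotProduct_mulVec_nonneg v
  rw [hAv, dotProduct_smul] at h1
  have h2 : 0 < dotProduct (star v) v := dotProduct_star_self_pos_iff.2 hv
  have h3 : 0 ≤ t := by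
    by_contra hneg
    push_neg at hneg
    have : t • dotProduct (star v) v < 0 := by
      rw [smul_eq_mul]
      exact mul_neg_of_neg_of_pos hneg h2
    linarith
  exact lt_of_le_of_ne h3 (Ne.symm ht)

/-- Key correspondence between nonzero eigenvalues of `R * F * Rt` and of `M`,
where `Rt * R = M` and `F` is the inverse of `ρ⁻¹ • 1 + M`. -/
lemma eigen_corr {n : ℕ} (R Rt F M : Matrix (Fin n) (Fin n) ℝ) {ρ : ℝ} (hρ : 0 < ρ)
    (hM : M.PosSemidef)
    (hRtR : Rt * R = M)
    (hFN : F * (ρ⁻¹ • (1 : Matrix (Fin n) (Fin n) ℝ) + M) = 1)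
    (hNF : (ρ⁻¹ • (1 : Matrix (Fin n) (Fin n) ℝ) + M) * F = 1)
    (t : ℝ) :
    (t ≠ 0 ∧ HasEigen (R * F * Rt) t) ↔
      ∃ l, (l ≠ 0 ∧ HasEigen M l) ∧ t = ρ * l / (1 + ρ * l) := by
  have hρ' : ρ ≠ 0 := hρ.ne'
  constructor
  · rintro ⟨ht, w, hw, hKw⟩
    set u : Fin n → ℝ := Rt *ᵥ w with hu
    have hKw' : R *ᵥ (F *ᵥ u) = t • w := by
      rw [hu, mulVec_mulVec, mulVec_mulVec, hKw]
    have hune : u ≠ 0 := by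
      intro h0
      rw [h0, mulVec_zero, mulVec_zero] at hKw'
      exact hw (by simpa [ht, eq_comm, smul_eq_zero] using hKw'.symm)
    have hMFu : M *ᵥ (F *ᵥ u) = t • u := by
      calc M *ᵥ (F *ᵥ u) = (Rt * R) *ᵥ (F *ᵥ u) := by rw [hRtR]
        _ = Rt *ᵥ (R *ᵥ (F *ᵥ u)) := by simp only [mulVec_mulVec, Matrix.mul_assoc]
        _ = Rt *ᵥ (t • w) := by rw [hKw']
        _ = t • u := by rw [mulVec_smul, hu]
    set z : Fin n → ℝ := F *ᵥ u with hz
    have hNz : ρ⁻¹ • z + M *ᵥ z = u := by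
      have h := congrArg (fun A : Matrix (Fin n) (Fin n) ℝ => A *ᵥ u) hNF
      simp only [one_mulVec] at h
      rw [← mulVec_mulVec, ← hz, add_mulVec, smul_mulVec, one_mulVec] at h
      exact h
    have hzne : z ≠ 0 := by
      intro h0
      rw [h0, smul_zero, mulVec_zero, add_zero] at hNz
      exact hune hNz.symm
    have hMz : M *ᵥ z = t • (ρ⁻¹ • z + M *ᵥ z) := by
      rw [hNz]; exact hMFu
    have ht1 : t ≠ 1 := by
      intro h1
      rw [h1, one_smul] at hMz
      have hz0 : ρ⁻¹ • z = 0 := by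
        have := congrArg (fun w => w - M *ᵥ z) hMz
        simpa using this.symm
      exact hzne ((smul_eq_zero.mp hz0).resolve_left (inv_ne_zero hρ'))
    have h1t : (1 : ℝ) - t ≠ 0 := sub_ne_zero.2 (fun h => ht1 h.symm)
    have key : (1 - t) • (M *ᵥ z) = (t * ρ⁻¹) • z := by
      have h := hMz
      rw [smul_add, smul_smul] at h
      rw [sub_smul, one_smul]
      nth_rewrite 1 [h]
      abel
    set l : ℝ := t * ρ⁻¹ / (1 - t) with hl
    have hMl : M *ᵥ z = l • z := by
      have h := congrArg (fun w => (1 - t)⁻¹ • w) key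
      simp only [smul_smul] at h
      rw [inv_mul_cancel₀ h1t, one_smul] at h
      rw [h, hl]
      congr 1
      rw [div_eq_inv_mul]
    have hlne : l ≠ 0 := div_ne_zero (mul_ne_zero ht (inv_ne_zero hρ')) h1t
    refine ⟨l, ⟨hlne, z, hzne, hMl⟩, ?_⟩
    have hρl : ρ * l = t / (1 - t) := by
      rw [hl]; field_simp
    have hd : 1 + ρ * l = (1 - t)⁻¹ := by
      rw [hρl]; field_simp; ring
    rw [hd, hρl]
    field_simp
  · rintro ⟨l, ⟨hl, v, hv, hMv⟩, htval⟩
    have hlpos : 0 < l := eigen_pos hM hl ⟨v, hv, hMv⟩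
    have hdpos : (0 : ℝ) < 1 + ρ * l := by nlinarith
    have ht0 : t ≠ 0 := by
      rw [htval]
      exact (div_pos (mul_pos hρ hlpos) hdpos).ne'
    have hc : ρ⁻¹ + l ≠ 0 := by positivity
    have hNv : (ρ⁻¹ • (1 : Matrix (Fin n) (Fin n) ℝ) + M) *ᵥ v = (ρ⁻¹ + l) • v := by
      rw [add_mulVec, smul_mulVec, one_mulVec, hMv, add_smul]
    have hFv : F *ᵥ v = (ρ⁻¹ + l)⁻¹ • v := by
      have h1 : F *ᵥ ((ρ⁻¹ • (1 : Matrix (Fin n) (Fin n) ℝ) + M) *ᵥ v) = v := by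
        rw [mulVec_mulVec, hFN, one_mulVec]
      rw [hNv, mulVec_smul] at h1
      have h2 := congrArg (fun w => (ρ⁻¹ + l)⁻¹ • w) h1
      simpa [smul_smul, inv_mul_cancel₀ hc] using h2
    have hwne : R *ᵥ v ≠ 0 := by
      intro h0
      have hMv0 : M *ᵥ v = 0 := by
        rw [← hRtR, ← mulVec_mulVec, h0, mulVec_zero]
      rw [hMv] at hMv0
      exact hv ((smul_eq_zero.mp hMv0).resolve_left hl)
    have hKv : (R * F * Rt) *ᵥ (R *ᵥ v) = (l * (ρ⁻¹ + l)⁻¹) • (R *ᵥ v) := by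
      calc (R * F * Rt) *ᵥ (R *ᵥ v) = ((R * F * Rt) * R) *ᵥ v := by rw [mulVec_mulVec]
        _ = ((R * F) * M) *ᵥ v := by rw [Matrix.mul_assoc (R * F) Rt R, hRtR]
        _ = R *ᵥ (F *ᵥ (M *ᵥ v)) := by rw [mulVec_mulVec, mulVec_mulVec]
        _ = R *ᵥ (F *ᵥ (l • v)) := by rw [hMv]
        _ = R *ᵥ (l • (F *ᵥ v)) := by rw [mulVec_smul]
        _ = l • (ρ⁻¹ + l)⁻¹ • (R *ᵥ v) := by rw [hFv, mulVec_smul, mulVec_smul]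
        _ = (l * (ρ⁻¹ + l)⁻¹) • (R *ᵥ v) := by rw [smul_smul]
    have hscal : l * (ρ⁻¹ + l)⁻¹ = ρ * l / (1 + ρ * l) := by
      field_simp
    refine ⟨ht0, R *ᵥ v, hwne, ?_⟩
    rw [hKv, hscal, htval]

theorem lambdaMinPos_formula {n : ℕ} (H G : Matrix (Fin n) (Fin n) ℝ)
    (hH : H.PosSemidef) (hHne : H ≠ 0) (hG : G.PosDef) (ρ : ℝ) (hρ : 0 < ρ) :
    lambdaMinPos (hH.sqrt * (ρ⁻¹ • G + H)⁻¹ * hH.sqrt) =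
      ρ * lambdaMinPos ((hG.posSemidef.sqrt)⁻¹ * H * (hG.posSemidef.sqrt)⁻¹) /
        (1 + ρ * lambdaMinPos ((hG.posSemidef.sqrt)⁻¹ * H * (hG.posSemidef.sqrt)⁻¹)) := by
  classical
  have hρ' : ρ ≠ 0 := hρ.ne'
  set S := hG.posSemidef.sqrt with hSdef
  set Q := hH.sqrt with hQdef
  have hS : S.PosSemidef := hG.posSemidef.posSemidef_sqrt
  have hSS : S * S = G := hG.posSemidef.sqrt_mul_self
  have hQQ : Q * Q = H := hH.sqrt_mul_self
  have hSdet : IsUnit S.det := by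
    have hdet : S.det * S.det = G.det := by rw [← det_mul, hSS]
    have hGdet := hG.det_pos
    refine isUnit_iff_ne_zero.2 (fun h0 => ?_)
    rw [h0, mul_zero] at hdet
    exact hGdet.ne' hdet.symm
  have hSinv1 : S * S⁻¹ = 1 := mul_nonsing_inv _ hSdet
  have hSinv2 : S⁻¹ * S = 1 := nonsing_inv_mul _ hSdet
  have hSinvH : (S⁻¹).IsHermitian := hS.isHermitian.inv
  set M := S⁻¹ * H * S⁻¹ with hMdef
  have hM : M.PosSemidef := by
    have h := hH.conjTranspose_mul_mul_same S⁻¹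
    rwa [hSinvH.eq] at h
  -- the matrix N = ρ⁻¹ • 1 + M is positive definite
  set N : Matrix (Fin n) (Fin n) ℝ := ρ⁻¹ • (1 : Matrix (Fin n) (Fin n) ℝ) + M with hNdef
  have hone : (ρ⁻¹ • (1 : Matrix (Fin n) (Fin n) ℝ)).IsHermitian := by
    unfold Matrix.IsHermitian
    rw [conjTranspose_smul, conjTranspose_one]
    simp
  have hN : N.PosDef := by
    refine PosDef.of_dotProduct_mulVec_pos (hone.add hM.isHermitian) (fun x hx => ?_)
    have h2 : 0 ≤ dotProduct (star x) (M *ᵥ x) := hM.dotProduct_mulVec_nonneg x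
    have h1 : 0 < dotProduct (star x) x := dotProduct_star_self_pos_iff.2 hx
    rw [add_mulVec, dotProduct_add, smul_mulVec, one_mulVec, dotProduct_smul,
      smul_eq_mul]
    have : 0 < ρ⁻¹ * dotProduct (star x) x := mul_pos (by positivity) h1
    linarith
  have hNdet : IsUnit N.det := hN.det_pos.ne'.isUnit
  have hNF : N * N⁻¹ = 1 := mul_nonsing_inv _ hNdet
  have hFN : N⁻¹ * N = 1 := nonsing_inv_mul _ hNdet
  -- key factorization
  have hSMS : S * M * S = H := by
    rw [hMdef, ← Matrix.mul_assoc, ← Matrix.mul_assoc, hSinv1, Matrix.one_mul,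
      Matrix.mul_assoc, hSinv2, Matrix.mul_one]
  have hGH : ρ⁻¹ • G + H = S * N * S := by
    rw [hNdef, Matrix.mul_add, Matrix.add_mul, hSMS, Matrix.mul_smul, Matrix.mul_one,
      Matrix.smul_mul, hSS]
  have hinv : (ρ⁻¹ • G + H)⁻¹ = S⁻¹ * N⁻¹ * S⁻¹ := by
    rw [hGH, Matrix.mul_inv_rev, Matrix.mul_inv_rev, Matrix.mul_assoc]
  have hKeq : Q * (ρ⁻¹ • G + H)⁻¹ * Q = (Q * S⁻¹) * N⁻¹ * (S⁻¹ * Q) := by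
    rw [hinv]
    simp only [Matrix.mul_assoc]
  have hRtR : (S⁻¹ * Q) * (Q * S⁻¹) = M := by
    rw [hMdef, ← hQQ]
    simp only [Matrix.mul_assoc]
  -- eigenvalue sets
  set E := {l : ℝ | l ≠ 0 ∧ HasEigen M l} with hEdef
  have hEfin : E.Finite := finite_eigenSet M
  have hMne : M ≠ 0 := by
    intro h0
    rw [h0] at hSMS
    rw [Matrix.mul_zero, Matrix.zero_mul] at hSMS
    exact hHne hSMS.symm
  have hEne : E.Nonempty := by
    obtain ⟨v, t, ht, hv, heq⟩ := hM.isHermitian.exists_eigenvector_of_ne_zero hMne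
    exact ⟨t, ht, v, hv, heq⟩
  set l₀ := sInf E with hl₀def
  have hl₀mem : l₀ ∈ E := hEne.csInf_mem hEfin
  have hl₀pos : 0 < l₀ := eigen_pos hM hl₀mem.1 hl₀mem.2
  have hcorr := eigen_corr (Q * S⁻¹) (S⁻¹ * Q) N⁻¹ M hρ hM hRtR (hNdef ▸ hFN) (hNdef ▸ hNF)
  have hT : {t : ℝ | t ≠ 0 ∧ HasEigen (Q * (ρ⁻¹ • G + H)⁻¹ * Q) t}
      = (fun l => ρ * l / (1 + ρ * l)) '' E := by
    ext t
    rw [Set.mem_setOf_eq, hKeq, hcorr t]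
    constructor
    · rintro ⟨l, hl, ht⟩
      exact ⟨l, hl, ht.symm⟩
    · rintro ⟨l, hl, ht⟩
      exact ⟨l, hl, ht.symm⟩
  have hmono : ∀ l ∈ E, ρ * l₀ / (1 + ρ * l₀) ≤ ρ * l / (1 + ρ * l) := by
    intro l hl
    have hlpos : 0 < l := eigen_pos hM hl.1 hl.2
    have hle : l₀ ≤ l := csInf_le hEfin.bddBelow hl
    have hd₀ : (0 : ℝ) < 1 + ρ * l₀ := by nlinarith
    have hd : (0 : ℝ) < 1 + ρ * l := by nlinarith
    rw [div_le_div_iff₀ hd₀ hd]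
    nlinarith
  have hgoal : sInf {t : ℝ | t ≠ 0 ∧ HasEigen (Q * (ρ⁻¹ • G + H)⁻¹ * Q) t}
      = ρ * l₀ / (1 + ρ * l₀) := by
    rw [hT]
    refine le_antisymm ?_ ?_
    · exact csInf_le (hEfin.image _).bddBelow ⟨l₀, hl₀mem, rfl⟩
    · refine le_csInf (hEne.image _) ?_
      rintro t ⟨l, hl, rfl⟩
      exact hmono l hl
  exact hgoal
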